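/- Let 𝔏 be the space of real tempered distributions f on ℝ (modulo the constraint of pairing with Schwartz functions of vanishing integral) whose Fourier transform f̂ is a measurable function with ∫_0^∞ p |f̂(p)|² dp < ∞, equipped with the inner product ⟨f,g⟩ = Re ∫_0^∞ p f̂(−p) ĝ(p) dp. Then 𝔏 is complete, i.e., a real Hilbert space. -/

import Mathlib

open MeasureTheory Filter Topology

open scoped ENNReal NNReal

noncomputable def muw : Measure ℝ :=
  (volume.restrict (Set.Ioi 0)).withDensity fun p => ENNReal.ofReal p

lemma key_lintegral (f : ℝ → ℂ) (hf : Measurable f) :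
    ∫⁻ p in Set.Ioi (0:ℝ), ENNReal.ofReal (p * ‖f p‖ ^ 2) =
      ∫⁻ p, (‖f p‖₊ : ℝ≥0∞) ^ 2 ∂muw := by
  rw [muw, lintegral_withDensity_eq_lintegral_mul _ ENNReal.measurable_ofReal
    (hf.nnnorm.coe_nnreal_ennreal.pow_const 2)]
  refine setLIntegral_congr_fun measurableSet_Ioi (fun p hp => ?_)
  simp only [Pi.mul_apply]
  rw [ENNReal.ofReal_mul (le_of_lt hp), ENNReal.ofReal_pow (norm_nonneg _),
    ofReal_norm, enorm_eq_nnnorm]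

lemma eLpNorm_sq (f : ℝ → ℂ) :
    eLpNorm f 2 muw ^ 2 = ∫⁻ p, (‖f p‖₊ : ℝ≥0∞) ^ 2 ∂muw := by
  rw [eLpNorm_eq_lintegral_rpow_enorm_toReal two_ne_zero ENNReal.ofNat_ne_top]
  simp only [enorm_eq_nnnorm]
  rw [← ENNReal.rpow_natCast _ 2, ← ENNReal.rpow_mul]
  norm_num

lemma ae_mem_Ioi : ∀ᵐ p ∂muw, p ∈ Set.Ioi (0:ℝ) :=
  (withDensity_absolutelyContinuous _ _).ae_le (ae_restrict_mem measurableSet_Ioi)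


/-- Completeness of the space `𝔏`: a sequence of (Fourier transforms of) real tempered
distributions, i.e. measurable functions `F n : ℝ → ℂ` with `F n (-p) = conj (F n p)`
and `∫_0^∞ p |F n p|² dp < ∞`, which is Cauchy in the norm
`‖f‖² = ∫_0^∞ p |f̂(p)|² dp`, converges in that norm to an element of `𝔏`. -/
theorem stmt12 (F : ℕ → ℝ → ℂ)
    (hmeas : ∀ n, Measurable (F n))
    (hreal : ∀ n, ∀ p : ℝ, F n (-p) = starRingEnd ℂ (F n p))
    (hfin : ∀ n, ∫⁻ p in Set.Ioi (0 : ℝ), ENNReal.ofReal (p * ‖F n p‖ ^ 2) < ⊤)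
    (hcauchy : ∀ ε : ℝ, 0 < ε → ∃ N : ℕ, ∀ n ≥ N, ∀ k ≥ N,
      ∫⁻ p in Set.Ioi (0 : ℝ), ENNReal.ofReal (p * ‖F n p - F k p‖ ^ 2)
        < ENNReal.ofReal ε) :
    ∃ G : ℝ → ℂ, Measurable G ∧ (∀ p : ℝ, G (-p) = starRingEnd ℂ (G p)) ∧
      (∫⁻ p in Set.Ioi (0 : ℝ), ENNReal.ofReal (p * ‖G p‖ ^ 2) < ⊤) ∧
      Tendsto (fun n => ∫⁻ p in Set.Ioi (0 : ℝ),
        ENNReal.ofReal (p * ‖F n p - G p‖ ^ 2)) atTop (𝓝 0) := by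
  -- membership in L²(μ)
  have hmem : ∀ n, MemLp (F n) 2 muw := by
    intro n
    refine ⟨(hmeas n).aestronglyMeasurable, ?_⟩
    have h := (hfin n)
    rw [key_lintegral _ (hmeas n), ← eLpNorm_sq] at h
    rw [lt_top_iff_ne_top] at h ⊢
    intro htop
    exact h (by simp [htop])
  set fLp : ℕ → Lp ℂ 2 muw := fun n => (hmem n).toLp (F n) with hfLp
  -- distance formula
  have hdist : ∀ n k, ENNReal.ofReal (dist (fLp n) (fLp k)) ^ 2 =
      ∫⁻ p in Set.Ioi (0:ℝ), ENNReal.ofReal (p * ‖F n p - F k p‖ ^ 2) := by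
    intro n k
    have h1 : eLpNorm (F n - F k) 2 muw ^ 2 =
        ∫⁻ p in Set.Ioi (0:ℝ), ENNReal.ofReal (p * ‖F n p - F k p‖ ^ 2) := by
      rw [key_lintegral (fun p => F n p - F k p) ((hmeas n).sub (hmeas k)), ← eLpNorm_sq]; rfl
    have h2 : dist (fLp n) (fLp k) = (eLpNorm (F n - F k) 2 muw).toReal := by
      rw [Lp.dist_def]
      congr 1
      apply eLpNorm_congr_ae
      filter_upwards [(hmem n).coeFn_toLp, (hmem k).coeFn_toLp] with p h h'
      simp [hfLp, h, h']
    have hne : eLpNorm (F n - F k) 2 muw ≠ ⊤ := ((hmem n).sub (hmem k)).2.ne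
    rw [h2, ENNReal.ofReal_toReal hne, h1]
  -- Cauchy
  have hC : CauchySeq fLp := by
    rw [Metric.cauchySeq_iff]
    intro ε hε
    obtain ⟨N, hN⟩ := hcauchy (ε^2) (by positivity)
    refine ⟨N, fun n hn k hk => ?_⟩
    have := hN n hn k hk
    rw [← hdist n k] at this
    rw [ENNReal.ofReal_pow hε.le] at this
    have hlt : ENNReal.ofReal (dist (fLp n) (fLp k)) < ENNReal.ofReal ε := by
      by_contra hcon
      push_neg at hcon
      exact absurd (pow_le_pow_left' hcon 2) (not_le.mpr this)
    exact (ENNReal.ofReal_lt_ofReal_iff hε).mp hlt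
  -- limit in L²
  obtain ⟨G1, hG1⟩ := cauchySeq_tendsto_of_complete hC
  set G0 : ℝ → ℂ := (Lp.aestronglyMeasurable G1).mk G1 with hG0def
  have hG0sm : StronglyMeasurable G0 := (Lp.aestronglyMeasurable G1).stronglyMeasurable_mk
  have hG0ae : ⇑G1 =ᵐ[muw] G0 := (Lp.aestronglyMeasurable G1).ae_eq_mk
  set G : ℝ → ℂ := fun p =>
    if 0 < p then G0 p else if p < 0 then starRingEnd ℂ (G0 (-p)) else 0 with hGdef
  have hGmeas : Measurable G := by
    apply Measurable.ite (measurableSet_lt measurable_const measurable_id) hG0sm.measurable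
    apply Measurable.ite (measurableSet_lt measurable_id measurable_const)
    · exact Complex.continuous_conj.measurable.comp (hG0sm.measurable.comp measurable_neg)
    · exact measurable_const
  have hGsymm : ∀ p : ℝ, G (-p) = starRingEnd ℂ (G p) := by
    intro p
    rcases lt_trichotomy p 0 with h | h | h
    · simp [hGdef, h, not_lt.mpr h.le, neg_pos.mpr h, lt_asymm h]
    · simp [hGdef, h]
    · simp [hGdef, h, not_lt.mpr h.le, neg_neg, neg_lt_zero.mpr h, lt_asymm h]
  have hGae : G =ᵐ[muw] ⇑G1 := by
    filter_upwards [ae_mem_Ioi, hG0ae] with p hp h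
    rw [hGdef]
    simp only [if_pos (Set.mem_Ioi.mp hp)]
    exact h.symm
  have hGfin : ∫⁻ p in Set.Ioi (0:ℝ), ENNReal.ofReal (p * ‖G p‖ ^ 2) < ⊤ := by
    rw [key_lintegral _ hGmeas,
      lintegral_congr_ae (hGae.mono fun p h => by rw [h]), ← eLpNorm_sq]
    exact ENNReal.pow_lt_top (Lp.eLpNorm_lt_top G1)
  refine ⟨G, hGmeas, hGsymm, hGfin, ?_⟩
  have hterm : ∀ n, ∫⁻ p in Set.Ioi (0:ℝ), ENNReal.ofReal (p * ‖F n p - G p‖ ^ 2)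
      = ENNReal.ofReal (dist (fLp n) G1) ^ 2 := by
    intro n
    have hk := key_lintegral (fun p => F n p - G p) ((hmeas n).sub hGmeas)
    rw [hk]
    have heq : eLpNorm (fun p => F n p - G p) 2 muw
        = eLpNorm (⇑(fLp n) - ⇑G1) 2 muw := by
      apply eLpNorm_congr_ae
      filter_upwards [(hmem n).coeFn_toLp, hGae] with p h1 h2
      simp [Pi.sub_apply, hfLp] at h1 ⊢
      rw [h1, h2]
    have hsq := eLpNorm_sq (fun p => F n p - G p)
    rw [← hsq, heq, Lp.dist_def, ENNReal.ofReal_toReal]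
    exact ((Lp.memLp (fLp n)).sub (Lp.memLp G1)).2.ne
  simp only [hterm]
  have hd : Tendsto (fun n => dist (fLp n) G1) atTop (𝓝 0) :=
    tendsto_iff_dist_tendsto_zero.mp hG1
  have ho : Tendsto (fun n => ENNReal.ofReal (dist (fLp n) G1)) atTop (𝓝 0) := by
    simpa using ENNReal.tendsto_ofReal hd
  simpa [Function.comp_def] using ((ENNReal.continuous_pow 2).tendsto 0).comp ho
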